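/- Let q ≥ 2 and ν > 0, and let c be sufficiently large in terms of q and n sufficiently large in terms of c. Let (A,B) be a (q,ν,n,c)-good pair in a graph G, and set p = c·n^{−1+1/q}. Then for every B' ⊆ B with |B'| < n/c^{q+2}, the number of vertices v ∈ A for which there exists some 1 ≤ k ≤ q−1 with |N^k_G(v) ∩ B'| ≥ (np)^k / c^{q+1} is at most n^{1−1/(2q)}. -/

import Mathlib

open Finset Filter
open scoped Classical

/-- A vertex `v ∈ A` is `(A, B, q, ν)`-expanding in `G`: at least `(1 - ν)|A|` vertices
`w ∈ A` are joined to `v` by a path of length `q` all of whose internal vertices lie in `B`. -/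
def IsExpandingVertex {α : Type*} (G : SimpleGraph α) (A B : Finset α) (q : ℕ) (ν : ℝ)
    (v : α) : Prop :=
  (1 - ν) * A.card ≤
    ((A.filter fun w => ∃ P : G.Walk v w, P.IsPath ∧ P.length = q ∧
        ∀ x ∈ P.support, x ≠ v → x ≠ w → x ∈ B).card : ℝ)

/-- The pair `(A, B)` is `(q, ν, n, c)`-good in `G[A ∪ B]`, with `p = c·n^{-1+1/q}`:
`A`, `B` are disjoint, `|A| = n`, every vertex of `A` is `(A,B,q,ν)`-expanding,
`Δ(G[A ∪ B]) < 2np`, and for every `B' ⊆ A ∪ B` with `|B'| < n/c^{q+2}` at most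
`n^{1-1/(2q)}/q` vertices `v ∈ A ∪ B` have `|N_{B'}(v)| ≥ 2np/c^{q+3/2}`. -/
def IsGoodPair {α : Type*} (G : SimpleGraph α) (A B : Finset α) (q n : ℕ) (ν c : ℝ) : Prop :=
  Disjoint A B ∧
  A.card = n ∧
  (∀ v ∈ A, IsExpandingVertex G A B q ν v) ∧
  (∀ v ∈ A ∪ B, (((A ∪ B).filter fun w => G.Adj v w).card : ℝ)
      < 2 * n * (c * (n : ℝ) ^ (-1 + 1 / (q : ℝ)))) ∧
  (∀ B' ⊆ A ∪ B, (B'.card : ℝ) < (n : ℝ) / c ^ (q + 2) →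
    (((A ∪ B).filter fun v =>
        2 * n * (c * (n : ℝ) ^ (-1 + 1 / (q : ℝ))) / c ^ ((q : ℝ) + 3 / 2)
          ≤ ((B'.filter fun w => G.Adj v w).card : ℝ)).card : ℝ)
      ≤ (n : ℝ) ^ (1 - 1 / (2 * (q : ℝ))) / q)

/-- The `k`-th neighborhood of `v` in `G`: vertices reachable from `v` by walks of
length exactly `k`. -/
noncomputable def kthNbhd {α : Type*} [Fintype α] [DecidableEq α] (G : SimpleGraph α)
    (v : α) : ℕ → Finset α
  | 0 => {v}
  | k + 1 => Finset.univ.filter fun w => ∃ u ∈ kthNbhd G v k, G.Adj u w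

/-- The iterated sets `X_k`: `X_1` is the set of vertices with more than `d` neighbors
in `B'`, and `X_{k+1}` is the set of vertices with more than `d` neighbors in `X_k`. -/
noncomputable def iterX {α : Type*} [Fintype α] (G : SimpleGraph α) (B' : Finset α)
    (d : ℝ) : ℕ → Finset α
  | 0 => B'
  | k + 1 => Finset.univ.filter fun v => d < (((iterX G B' d k).filter fun w => G.Adj v w).card : ℝ)

lemma kthNbhd_succ_def {α : Type*} [Fintype α] [DecidableEq α] (G : SimpleGraph α)
    (v : α) (k : ℕ) : kthNbhd G v (k + 1) =
      Finset.univ.filter fun w => ∃ u ∈ kthNbhd G v k, G.Adj u w := by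
  rw [kthNbhd]

lemma kthNbhd_succ_eq {α : Type*} [Fintype α] [DecidableEq α] (G : SimpleGraph α) (k : ℕ) :
    ∀ v : α, kthNbhd G v (k + 1) =
      Finset.univ.filter fun w => ∃ u, G.Adj v u ∧ w ∈ kthNbhd G u k := by
  induction k with
  | zero =>
    intro v
    ext w
    simp [kthNbhd]
  | succ k ih =>
    intro v
    rw [kthNbhd_succ_def]
    ext w
    simp only [Finset.mem_filter, Finset.mem_univ, true_and]
    constructor
    · rintro ⟨u, hu, huw⟩
      rw [ih v, Finset.mem_filter] at hu
      obtain ⟨-, x, hvx, hux⟩ := hu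
      refine ⟨x, hvx, ?_⟩
      rw [kthNbhd_succ_def]
      simp only [Finset.mem_filter, Finset.mem_univ, true_and]
      exact ⟨u, hux, huw⟩
    · rintro ⟨x, hvx, hu⟩
      rw [kthNbhd_succ_def, Finset.mem_filter] at hu
      obtain ⟨-, u, hux, huw⟩ := hu
      refine ⟨u, ?_, huw⟩
      rw [ih v, Finset.mem_filter]
      exact ⟨Finset.mem_univ u, x, hvx, hux⟩

lemma kthNbhd_card_le {α : Type*} [Fintype α] [DecidableEq α] (G : SimpleGraph α) (D : ℝ)
    (hD : 0 ≤ D) (hdeg : ∀ v : α, ((Finset.univ.filter fun w => G.Adj v w).card : ℝ) ≤ D)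
    (v : α) (k : ℕ) : ((kthNbhd G v k).card : ℝ) ≤ D ^ k := by
  induction k with
  | zero => simp [kthNbhd]
  | succ k ih =>
    have hsub : kthNbhd G v (k + 1) ⊆
        (kthNbhd G v k).biUnion fun u => Finset.univ.filter fun w => G.Adj u w := by
      intro w hw
      simp only [kthNbhd, Finset.mem_filter, Finset.mem_univ, true_and] at hw
      obtain ⟨u, hu, huw⟩ := hw
      exact Finset.mem_biUnion.2 ⟨u, hu, by simp [huw]⟩
    calc ((kthNbhd G v (k + 1)).card : ℝ)
        ≤ (((kthNbhd G v k).biUnion fun u => Finset.univ.filter fun w => G.Adj u w).card : ℝ) := by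
          exact_mod_cast Nat.cast_le.2 (Finset.card_le_card hsub)
      _ ≤ ∑ u ∈ kthNbhd G v k, ((Finset.univ.filter fun w => G.Adj u w).card : ℝ) := by
          exact_mod_cast Nat.cast_le.2 Finset.card_biUnion_le
      _ ≤ ∑ _u ∈ kthNbhd G v k, D := Finset.sum_le_sum fun u _ => hdeg u
      _ = ((kthNbhd G v k).card : ℝ) * D := by rw [Finset.sum_const, nsmul_eq_mul]
      _ ≤ D ^ k * D := by exact mul_le_mul_of_nonneg_right ih hD
      _ = D ^ (k + 1) := by ring

lemma main_walk_bound {α : Type*} [Fintype α] [DecidableEq α] (G : SimpleGraph α) (B' : Finset α)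
    (d D : ℝ) (hd : 0 ≤ d) (hD : 0 ≤ D)
    (hdeg : ∀ v : α, ((Finset.univ.filter fun w => G.Adj v w).card : ℝ) ≤ D) :
    ∀ k : ℕ, 1 ≤ k → ∀ v : α, v ∉ iterX G B' d k →
      (((kthNbhd G v k ∩ B').card : ℝ)) ≤ k * d * D ^ (k - 1) := by
  intro k
  induction k with
  | zero => omega
  | succ k ih =>
    intro _ v hv
    have hvle : ∀ s : Finset α, (((s.filter fun w => G.Adj v w).card : ℝ)) ≤ d →
        True := fun _ _ => trivial
    have hXv : (((iterX G B' d k).filter fun w => G.Adj v w).card : ℝ) ≤ d := by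
      by_contra h
      push_neg at h
      exact hv (by simp [iterX, h])
    rcases Nat.eq_zero_or_pos k with hk0 | hk1
    · subst hk0
      -- base case k+1 = 1
      have hsub : kthNbhd G v 1 ∩ B' ⊆ B'.filter fun w => G.Adj v w := by
        intro w hw
        simp only [Finset.mem_inter, kthNbhd, Finset.mem_filter, Finset.mem_univ, true_and,
          Finset.mem_singleton] at hw ⊢
        obtain ⟨⟨u, hu, huw⟩, hwB⟩ := hw
        subst hu
        exact ⟨hwB, huw⟩
      have : ((kthNbhd G v 1 ∩ B').card : ℝ) ≤ ((B'.filter fun w => G.Adj v w).card : ℝ) :=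
        Nat.cast_le.2 (Finset.card_le_card hsub)
      simpa using this.trans hXv
    · -- inductive step
      set N := Finset.univ.filter fun u => G.Adj v u with hN
      have hsub : kthNbhd G v (k + 1) ∩ B' ⊆ N.biUnion fun u => kthNbhd G u k ∩ B' := by
        intro w hw
        rw [Finset.mem_inter, kthNbhd_succ_eq] at hw
        obtain ⟨hw1, hwB⟩ := hw
        simp only [Finset.mem_filter, Finset.mem_univ, true_and] at hw1
        obtain ⟨u, hvu, hwu⟩ := hw1
        exact Finset.mem_biUnion.2 ⟨u, by simp [hN, hvu], Finset.mem_inter.2 ⟨hwu, hwB⟩⟩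
      have hcount : (((N.filter fun u => u ∈ iterX G B' d k)).card : ℝ) ≤ d := by
        refine le_trans (Nat.cast_le.2 (Finset.card_le_card ?_)) hXv
        intro u hu
        simp only [hN, Finset.mem_filter, Finset.mem_univ, true_and] at hu ⊢
        exact ⟨hu.2, hu.1⟩
      have hterm : 0 ≤ (k : ℝ) * d * D ^ (k - 1) := by positivity
      have hk1' : k - 1 + 1 = k := by omega
      have hDk : D * D ^ (k - 1) = D ^ k := by
        rw [← pow_succ', hk1']
      calc ((kthNbhd G v (k + 1) ∩ B').card : ℝ)
          ≤ ((N.biUnion fun u => kthNbhd G u k ∩ B').card : ℝ) :=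
            Nat.cast_le.2 (Finset.card_le_card hsub)
        _ ≤ ∑ u ∈ N, ((kthNbhd G u k ∩ B').card : ℝ) := by
            exact_mod_cast Nat.cast_le.2 Finset.card_biUnion_le
        _ = (∑ u ∈ N.filter (fun u => u ∈ iterX G B' d k), ((kthNbhd G u k ∩ B').card : ℝ)) +
            ∑ u ∈ N.filter (fun u => u ∉ iterX G B' d k), ((kthNbhd G u k ∩ B').card : ℝ) :=
            (Finset.sum_filter_add_sum_filter_not N _ _).symm
        _ ≤ (∑ _u ∈ N.filter (fun u => u ∈ iterX G B' d k), D ^ k) +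
            ∑ _u ∈ N.filter (fun u => u ∉ iterX G B' d k), (k : ℝ) * d * D ^ (k - 1) := by
            refine add_le_add (Finset.sum_le_sum fun u _ => ?_)
              (Finset.sum_le_sum fun u hu => ?_)
            · exact le_trans (Nat.cast_le.2 (Finset.card_le_card Finset.inter_subset_left))
                (kthNbhd_card_le G D hD hdeg u k)
            · exact ih hk1 u (Finset.mem_filter.1 hu).2
        _ ≤ d * D ^ k + D * ((k : ℝ) * d * D ^ (k - 1)) := by
            rw [Finset.sum_const, Finset.sum_const, nsmul_eq_mul, nsmul_eq_mul]
            refine add_le_add (mul_le_mul_of_nonneg_right hcount (by positivity)) ?_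
            refine mul_le_mul_of_nonneg_right ?_ hterm
            refine le_trans (Nat.cast_le.2 (Finset.card_le_card (Finset.filter_subset _ _))) ?_
            exact hdeg v
        _ = ((k : ℝ) + 1) * d * D ^ k := by
            rw [show D * ((k : ℝ) * d * D ^ (k - 1)) = (k : ℝ) * d * (D * D ^ (k - 1)) by ring,
              hDk]; ring
        _ = ((k + 1 : ℕ) : ℝ) * d * D ^ (k + 1 - 1) := by push_cast; simp

theorem stmt6 (q : ℕ) (hq : 2 ≤ q) (ν : ℝ) (hν : 0 < ν) :
    ∃ c₀ : ℝ, ∀ c : ℝ, c₀ ≤ c → ∃ n₀ : ℕ, ∀ n : ℕ, n₀ ≤ n →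
      ∀ (α : Type*) [Fintype α] [DecidableEq α] (G : SimpleGraph α) (A B : Finset α),
        A ∪ B = Finset.univ →
        IsGoodPair G A B q n ν c →
        ∀ B' ⊆ B, (B'.card : ℝ) < (n : ℝ) / c ^ (q + 2) →
          ((A.filter fun v => ∃ k : ℕ, 1 ≤ k ∧ k ≤ q - 1 ∧
              ((n : ℝ) * (c * (n : ℝ) ^ (-1 + 1 / (q : ℝ)))) ^ k / c ^ (q + 1)
                ≤ ((kthNbhd G v k ∩ B').card : ℝ)).card : ℝ)
            ≤ (n : ℝ) ^ (1 - 1 / (2 * (q : ℝ))) := by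
  refine ⟨max 1 (((q : ℝ) * 2 ^ q) ^ 2 + 1), fun c hc => ?_⟩
  have hc1 : (1 : ℝ) ≤ c := le_trans (le_max_left _ _) hc
  have hcpos : (0 : ℝ) < c := lt_of_lt_of_le one_pos hc1
  have hc2 : ((q : ℝ) * 2 ^ q) ^ 2 < c :=
    lt_of_lt_of_le (lt_add_one _) (le_trans (le_max_right _ _) hc)
  refine ⟨⌈(c ^ (q + 2)) ^ (2 * q)⌉₊ + 1, fun n hn => ?_⟩
  intro α _ _ G A B hAB hgood B' hB'B hB'card
  obtain ⟨hdisj, hAcard, hexp, hdegs, h5⟩ := hgood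
  have hqR : (0 : ℝ) < q := by exact_mod_cast Nat.lt_of_lt_of_le Nat.zero_lt_two hq
  have hcq2pos : (0 : ℝ) < c ^ (q + 2) := by positivity
  have hbig : (c ^ (q + 2)) ^ (2 * q) < (n : ℝ) := by
    have h1 : (c ^ (q + 2)) ^ (2 * q) ≤ (⌈(c ^ (q + 2)) ^ (2 * q)⌉₊ : ℝ) := Nat.le_ceil _
    have h2 : (⌈(c ^ (q + 2)) ^ (2 * q)⌉₊ : ℝ) < (n : ℝ) := by exact_mod_cast hn
    linarith
  have hnpos : (0 : ℝ) < n := lt_of_le_of_lt (by positivity) hbig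
  have hn1 : 1 ≤ n := by exact_mod_cast Nat.one_le_cast.2 (by exact_mod_cast hnpos)
  set p : ℝ := c * (n : ℝ) ^ (-1 + 1 / (q : ℝ)) with hp
  have hppos : 0 < p := by
    rw [hp]; positivity
  set D : ℝ := 2 * n * p with hD
  have hDpos : 0 < D := by rw [hD]; positivity
  set d : ℝ := D / c ^ ((q : ℝ) + 3 / 2) with hd
  have hcq32 : (0 : ℝ) < c ^ ((q : ℝ) + 3 / 2) := Real.rpow_pos_of_pos hcpos _
  have hd0 : 0 ≤ d := by rw [hd]; positivity
  have hmemAB : ∀ x : α, x ∈ A ∨ x ∈ B := fun x =>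
    Finset.mem_union.1 ((Finset.ext_iff.1 hAB x).2 (Finset.mem_univ x))
  have hABuniv : ∀ (i : DecidableEq α),
      @Union.union _ (@Finset.instUnion α i) A B = Finset.univ := by
    intro i
    ext x
    rw [@Finset.mem_union _ i]
    exact ⟨fun _ => Finset.mem_univ x, fun _ => hmemAB x⟩
  have hdeg' : ∀ v : α, ((Finset.univ.filter fun w => G.Adj v w).card : ℝ) ≤ D := by
    intro v
    have h1 := hdegs v (by rw [hABuniv]; exact Finset.mem_univ v)
    rw [hABuniv] at h1
    exact le_of_lt h1
  -- the key quantity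
  set s : ℝ := (n : ℝ) ^ (1 - 1 / (2 * (q : ℝ))) with hs
  have hspos : 0 < s := by rw [hs]; positivity
  have hM : s / q < (n : ℝ) / c ^ (q + 2) := by
    have hkey : c ^ (q + 2) < (n : ℝ) ^ (1 / (2 * (q : ℝ))) := by
      have h1 : ((c ^ (q + 2)) ^ (2 * q) : ℝ) ^ (1 / (2 * (q : ℝ)))
          < (n : ℝ) ^ (1 / (2 * (q : ℝ))) :=
        Real.rpow_lt_rpow (by positivity) hbig (by positivity)
      rwa [← Real.rpow_natCast (c ^ (q + 2)) (2 * q), ← Real.rpow_mul (le_of_lt hcq2pos),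
        show ((2 * q : ℕ) : ℝ) * (1 / (2 * (q : ℝ))) = 1 by push_cast; field_simp,
        Real.rpow_one] at h1
    have heq : s = (n : ℝ) / (n : ℝ) ^ (1 / (2 * (q : ℝ))) := by
      rw [hs, Real.rpow_sub hnpos, Real.rpow_one]
    have h2 : s < (n : ℝ) / c ^ (q + 2) := by
      rw [heq]
      exact div_lt_div_of_pos_left hnpos hcq2pos hkey
    have h3 : s / q ≤ s := by
      apply div_le_self (le_of_lt hspos)
      exact_mod_cast Nat.one_le_cast.2 (by omega)
    linarith
  -- iterated bound on the X_j
  have hX : ∀ j : ℕ, ((iterX G B' d j).card : ℝ) < (n : ℝ) / c ^ (q + 2) ∧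
      (1 ≤ j → ((iterX G B' d j).card : ℝ) ≤ s / q) := by
    intro j
    induction j with
    | zero =>
      refine ⟨?_, fun h => absurd h (by omega)⟩
      simp only [iterX]
      exact hB'card
    | succ j ihj =>
      have happ := h5 (iterX G B' d j)
        (by rw [hABuniv]; exact Finset.subset_univ _) ihj.1
      have h1 : ((iterX G B' d (j + 1)).card : ℝ) ≤ s / q := by
        refine le_trans ?_ happ
        refine Nat.cast_le.2 (Finset.card_le_card ?_)
        intro v hv
        simp only [iterX, Finset.mem_filter, Finset.mem_univ, true_and] at hv
        refine Finset.mem_filter.2 ⟨?_, le_of_lt hv⟩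
        rw [hABuniv]
        exact Finset.mem_univ v
      exact ⟨lt_of_le_of_lt h1 hM, fun _ => h1⟩
  -- bad vertices lie in some X_k
  have hXmem : ∀ v ∈ A, ∀ k : ℕ, 1 ≤ k → k ≤ q - 1 →
      ((n : ℝ) * p) ^ k / c ^ (q + 1) ≤ ((kthNbhd G v k ∩ B').card : ℝ) →
      v ∈ iterX G B' d k := by
    intro v _ k hk1 hk2 hge
    by_contra hv
    have hb := main_walk_bound G B' d D hd0 (le_of_lt hDpos) hdeg' k hk1 v hv
    have hDk : D ^ (k - 1) * D = D ^ k := by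
      rw [← pow_succ, Nat.sub_add_cancel hk1]
    have heq1 : (k : ℝ) * d * D ^ (k - 1)
        = (k : ℝ) * 2 ^ k * ((n : ℝ) * p) ^ k / c ^ ((q : ℝ) + 3 / 2) := by
      rw [hd]
      rw [show (k : ℝ) * (D / c ^ ((q : ℝ) + 3 / 2)) * D ^ (k - 1)
        = (k : ℝ) * (D ^ (k - 1) * D) / c ^ ((q : ℝ) + 3 / 2) by ring, hDk]
      have : D ^ k = 2 ^ k * ((n : ℝ) * p) ^ k := by
        rw [hD, show 2 * (n : ℝ) * p = 2 * ((n : ℝ) * p) by ring, mul_pow]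
      rw [this]; ring
    have hsplit : c ^ ((q : ℝ) + 3 / 2) = c ^ (q + 1) * c ^ ((1 : ℝ) / 2) := by
      rw [show ((q : ℝ) + 3 / 2) = ((q + 1 : ℕ) : ℝ) + 1 / 2 by push_cast; ring,
        Real.rpow_add hcpos, Real.rpow_natCast]
    have hhalf : (k : ℝ) * 2 ^ k < c ^ ((1 : ℝ) / 2) := by
      have h1 : (k : ℝ) * 2 ^ k ≤ (q : ℝ) * 2 ^ q := by
        have hkq : k ≤ q := by omega
        have := pow_le_pow_right₀ (by norm_num : (1 : ℝ) ≤ 2) hkq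
        have hkq' : (k : ℝ) ≤ q := by exact_mod_cast hkq
        nlinarith [pow_pos (by norm_num : (0:ℝ) < 2) k]
      have h2 : (q : ℝ) * 2 ^ q < c ^ ((1 : ℝ) / 2) := by
        rw [← Real.sqrt_eq_rpow]
        exact (Real.lt_sqrt (by positivity)).2 hc2
      linarith
    have hnppos : (0 : ℝ) < ((n : ℝ) * p) ^ k := by positivity
    have hcq1pos : (0 : ℝ) < c ^ (q + 1) := by positivity
    have hch : (0 : ℝ) < c ^ ((1 : ℝ) / 2) := Real.rpow_pos_of_pos hcpos _
    have hlt : (k : ℝ) * d * D ^ (k - 1) < ((n : ℝ) * p) ^ k / c ^ (q + 1) := by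
      rw [heq1, hsplit]
      rw [show (k : ℝ) * 2 ^ k * ((n : ℝ) * p) ^ k / (c ^ (q + 1) * c ^ ((1 : ℝ) / 2))
        = ((k : ℝ) * 2 ^ k / c ^ ((1 : ℝ) / 2)) * (((n : ℝ) * p) ^ k / c ^ (q + 1)) by
          field_simp]
      have h1 : (k : ℝ) * 2 ^ k / c ^ ((1 : ℝ) / 2) < 1 := (div_lt_one hch).2 hhalf
      have hpos : (0 : ℝ) < ((n : ℝ) * p) ^ k / c ^ (q + 1) := by positivity
      exact mul_lt_of_lt_one_left hpos h1
    exact absurd (le_trans hge hb) (not_le.2 hlt)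
  -- put it together
  have hsubbad : (A.filter fun v => ∃ k : ℕ, 1 ≤ k ∧ k ≤ q - 1 ∧
        ((n : ℝ) * p) ^ k / c ^ (q + 1) ≤ ((kthNbhd G v k ∩ B').card : ℝ))
      ⊆ (Finset.Icc 1 (q - 1)).biUnion fun k => iterX G B' d k := by
    intro v hv
    rw [Finset.mem_filter] at hv
    obtain ⟨hvA, k, hk1, hk2, hge⟩ := hv
    exact Finset.mem_biUnion.2 ⟨k, Finset.mem_Icc.2 ⟨hk1, hk2⟩, hXmem v hvA k hk1 hk2 hge⟩
  calc ((A.filter fun v => ∃ k : ℕ, 1 ≤ k ∧ k ≤ q - 1 ∧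
          ((n : ℝ) * p) ^ k / c ^ (q + 1) ≤ ((kthNbhd G v k ∩ B').card : ℝ)).card : ℝ)
      ≤ (((Finset.Icc 1 (q - 1)).biUnion fun k => iterX G B' d k).card : ℝ) :=
        Nat.cast_le.2 (Finset.card_le_card hsubbad)
    _ ≤ ∑ k ∈ Finset.Icc 1 (q - 1), ((iterX G B' d k).card : ℝ) := by
        exact_mod_cast Nat.cast_le.2 Finset.card_biUnion_le
    _ ≤ ∑ _k ∈ Finset.Icc 1 (q - 1), s / q := by
        refine Finset.sum_le_sum fun k hk => ?_
        exact (hX k).2 (Finset.mem_Icc.1 hk).1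
    _ = ((q - 1 : ℕ) : ℝ) * (s / q) := by
        rw [Finset.sum_const, nsmul_eq_mul, Nat.card_Icc]
        norm_num
    _ ≤ (q : ℝ) * (s / q) := by
        refine mul_le_mul_of_nonneg_right ?_ (by positivity)
        exact Nat.cast_le.2 (Nat.sub_le q 1)
    _ = s := by field_simp
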